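/- Let p^* ∈ E with p^* ≠ p_i for all i, let p ∈ E satisfy ‖p − p^*‖ < ‖p_i − p^*‖ for all i (so in particular p ≠ p_i for all i), set δ = p − p^*, and suppose Λ > 0 satisfies Σ_{i=1}^n ω_i (‖x‖² − ⟨g_i(p^*), x⟩²) ≤ Λ‖x‖² for all x ∈ E. Then Σ_{i=1}^n ω_i d_i(p)(1 − ⟨g_i(p), g_i(p^*)⟩) ≤ Λ‖δ‖² / min_{1≤i≤n} d_i(p). -/

import Mathlib

open scoped RealInnerProductSpace BigOperators

/-- The bearing vector from point `q` towards beacon `P i`. -/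
noncomputable def bearing {d n : ℕ} (P : Fin n → EuclideanSpace ℝ (Fin d))
    (q : EuclideanSpace ℝ (Fin d)) (i : Fin n) : EuclideanSpace ℝ (Fin d) :=
  ‖P i - q‖⁻¹ • (P i - q)

theorem stmt_4 {d n : ℕ} (hd : 2 ≤ d) (hn : 3 ≤ n)
    (P : Fin n → EuclideanSpace ℝ (Fin d)) (ω : Fin n → ℝ) (hω : ∀ i, 0 < ω i)
    (pstar : EuclideanSpace ℝ (Fin d)) (hps : ∀ i, pstar ≠ P i)
    (p : EuclideanSpace ℝ (Fin d))
    (hball : ∀ i, ‖p - pstar‖ < ‖P i - pstar‖)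
    (hp : ∀ i, p ≠ P i)
    (Lam : ℝ) (hLam : 0 < Lam)
    (hquad : ∀ x : EuclideanSpace ℝ (Fin d),
      ∑ i, ω i * (‖x‖ ^ 2 - ⟪bearing P pstar i, x⟫ ^ 2) ≤ Lam * ‖x‖ ^ 2) :
    ∑ i, ω i * ‖P i - p‖ * (1 - ⟪bearing P p i, bearing P pstar i⟫) ≤
      Lam * ‖p - pstar‖ ^ 2 /
        (Finset.univ.inf' (Finset.univ_nonempty_iff.mpr ⟨⟨0, by omega⟩⟩)
          (fun i => ‖P i - p‖)) := by
  set δ := p - pstar with hδ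
  set m := Finset.univ.inf' (Finset.univ_nonempty_iff.mpr ⟨⟨0, by omega⟩⟩)
      (fun i => ‖P i - p‖) with hm
  have hd_pos : ∀ i, 0 < ‖P i - p‖ := fun i =>
    norm_pos_iff.mpr (sub_ne_zero.mpr (hp i).symm)
  have hD_pos : ∀ i, 0 < ‖P i - pstar‖ := fun i =>
    norm_pos_iff.mpr (sub_ne_zero.mpr (hps i).symm)
  have hm_pos : 0 < m := by
    rw [hm]
    exact (Finset.lt_inf'_iff _).mpr (fun i _ => hd_pos i)
  have hm_le : ∀ i, m ≤ ‖P i - p‖ := fun i =>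
    Finset.inf'_le _ (Finset.mem_univ i)
  have hb1 : ∀ i, ‖bearing P pstar i‖ = 1 := by
    intro i
    rw [bearing, norm_smul, norm_inv, norm_norm,
      inv_mul_cancel₀ (ne_of_gt (hD_pos i))]
  have hnum : ∀ i, 0 ≤ ‖δ‖ ^ 2 - ⟪bearing P pstar i, δ⟫ ^ 2 := by
    intro i
    have h := abs_real_inner_le_norm (bearing P pstar i) δ
    rw [hb1 i, one_mul] at h
    nlinarith [sq_abs ⟪bearing P pstar i, δ⟫, abs_nonneg ⟪bearing P pstar i, δ⟫]
  have key : ∀ i, ‖P i - p‖ * (1 - ⟪bearing P p i, bearing P pstar i⟫) ≤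
      (‖δ‖ ^ 2 - ⟪bearing P pstar i, δ⟫ ^ 2) / ‖P i - p‖ := by
    intro i
    have hD := hD_pos i
    have hdp := hd_pos i
    set D := ‖P i - pstar‖ with hDdef
    set dd := ‖P i - p‖ with hdddef
    set t := ⟪bearing P pstar i, δ⟫ with ht
    have hvu : P i - p = (P i - pstar) - δ := by rw [hδ]; abel
    have ht' : ⟪P i - pstar, δ⟫ = D * t := by
      rw [ht, bearing, real_inner_smul_left]
      field_simp
      rw [mul_div_assoc, ← hDdef, div_self hD.ne', mul_one]
    have hnorm : dd ^ 2 = D ^ 2 - 2 * (D * t) + ‖δ‖ ^ 2 := by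
      rw [hdddef, hvu, ← ht', @norm_sub_sq_real]
    have hLHS : dd * (1 - ⟪bearing P p i, bearing P pstar i⟫) = dd - D + t := by
      have hib : ⟪bearing P p i, bearing P pstar i⟫ =
          dd⁻¹ * (D⁻¹ * ⟪P i - p, P i - pstar⟫) := by
        rw [bearing, bearing, real_inner_smul_left, real_inner_smul_right]
      have hinner : ⟪P i - p, P i - pstar⟫ = D * D - D * t := by
        rw [hvu, inner_sub_left, real_inner_self_eq_norm_sq, ← hDdef,
          real_inner_comm, ht']
        ring
      rw [hib, hinner]
      field_simp
      ring
    rw [le_div_iff₀ hdp, hLHS]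
    have hball' : ‖δ‖ < D := hball i
    have h2 : t ^ 2 ≤ ‖δ‖ ^ 2 := by linarith [hnum i]
    have habs : t ≤ ‖δ‖ := by
      have h := abs_real_inner_le_norm (bearing P pstar i) δ
      rw [hb1 i, one_mul] at h
      calc t ≤ |t| := le_abs_self t
        _ ≤ ‖δ‖ := h
    have hDt : 0 < D - t := by
      have : (0:ℝ) ≤ ‖δ‖ := norm_nonneg _
      linarith
    have hddge : D - t ≤ dd := by nlinarith
    nlinarith [mul_nonneg (sub_nonneg.mpr hddge) hDt.le]
  calc ∑ i, ω i * ‖P i - p‖ * (1 - ⟪bearing P p i, bearing P pstar i⟫)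
      ≤ ∑ i, ω i * ((‖δ‖ ^ 2 - ⟪bearing P pstar i, δ⟫ ^ 2) / m) := by
        apply Finset.sum_le_sum
        intro i _
        have h2 : (‖δ‖ ^ 2 - ⟪bearing P pstar i, δ⟫ ^ 2) / ‖P i - p‖ ≤
            (‖δ‖ ^ 2 - ⟪bearing P pstar i, δ⟫ ^ 2) / m := by
          gcongr
          · exact hnum i
          · exact hm_le i
        calc ω i * ‖P i - p‖ * (1 - ⟪bearing P p i, bearing P pstar i⟫)
            = ω i * (‖P i - p‖ * (1 - ⟪bearing P p i, bearing P pstar i⟫)) := by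
              ring
          _ ≤ ω i * ((‖δ‖ ^ 2 - ⟪bearing P pstar i, δ⟫ ^ 2) / m) :=
              mul_le_mul_of_nonneg_left ((key i).trans h2) (hω i).le
    _ = (∑ i, ω i * (‖δ‖ ^ 2 - ⟪bearing P pstar i, δ⟫ ^ 2)) / m := by
        rw [Finset.sum_div]
        exact Finset.sum_congr rfl fun i _ => (mul_div_assoc _ _ _).symm
    _ ≤ Lam * ‖δ‖ ^ 2 / m := by
        gcongr
        exact hquad δ
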